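/- Let q be an invertible element of a field F and let A be an associative unital F-algebra containing elements e₁, e₂ satisfying e₁² = (q+q⁻¹)e₁, e₂² = (q+q⁻¹)e₂, e₁e₂e₁ = e₁, e₂e₁e₂ = e₂. For nonzero z, w define Ř_i(z,w) = 1 + ((w−z)/(q⁻¹z − qw))·e_i (assuming q⁻¹z ≠ qw). Then for generic z₁, z₂, z₃: Ř₁(z₂,z₃)Ř₂(z₁,z₃)Ř₁(z₁,z₂) = Ř₂(z₁,z₂)Ř₁(z₁,z₃)Ř₂(z₂,z₃), and Ř_i(z,w)Ř_i(w,z) = 1. -/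

import Mathlib

section
variable {F : Type*} [Field F] {A : Type*} [Ring A] [Algebra F A]

lemma tl_unit (β u v : F) (e : A) (he : e * e = β • e)
    (h : u + v + u * v * β = 0) :
    (1 + u • e) * (1 + v • e) = 1 := by
  have : (1 + u • e) * (1 + v • e) = 1 + (u + v + u * v * β) • e := by
    simp only [add_mul, mul_add, one_mul, mul_one, smul_mul_assoc,
      mul_smul_comm, smul_smul, he]
    module
  rw [this, h, zero_smul, add_zero]

lemma tl_ybe (β a b c : F) (e1 e2 : A)
    (he1 : e1 * e1 = β • e1) (he2 : e2 * e2 = β • e2)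
    (h121 : e1 * e2 * e1 = e1) (h212 : e2 * e1 * e2 = e2)
    (hcoef : a + c + a * c * β + a * b * c = b) :
    (1 + a • e1) * (1 + b • e2) * (1 + c • e1) =
      (1 + c • e2) * (1 + b • e1) * (1 + a • e2) := by
  simp only [add_mul, mul_add, one_mul, mul_one, smul_mul_assoc,
    mul_smul_comm, smul_smul, ← mul_assoc, he1, he2, h121, h212, smul_smul]
  match_scalars
  all_goals first
    | ring1
    | linear_combination hcoef
    | linear_combination -hcoef

lemma coeff_eq {q : F} (hq : q ≠ 0) (z w : F) (h : q⁻¹ * z - q * w ≠ 0) :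
    (w - z) / (q⁻¹ * z - q * w) = q * (w - z) / (z - q ^ 2 * w) := by
  have h' : z - q ^ 2 * w ≠ 0 := by
    intro h0
    apply h
    have : q⁻¹ * z - q * w = (z - q ^ 2 * w) * q⁻¹ := by field_simp
    rw [this, h0, zero_mul]
  rw [div_eq_div_iff h h']
  field_simp

lemma denom_ne {q z w : F} (hq : q ≠ 0) (h : q⁻¹ * z - q * w ≠ 0) :
    z - q ^ 2 * w ≠ 0 := by
  intro h0
  apply h
  have : q⁻¹ * z - q * w = (z - q ^ 2 * w) * q⁻¹ := by field_simp
  rw [this, h0, zero_mul]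

end

set_option maxHeartbeats 2000000 in
theorem stmt2 (F : Type*) [Field F] (A : Type*) [Ring A] [Algebra F A]
    (q : F) (hq : q ≠ 0) (e1 e2 : A)
    (he1 : e1 * e1 = (q + q⁻¹) • e1) (he2 : e2 * e2 = (q + q⁻¹) • e2)
    (h121 : e1 * e2 * e1 = e1) (h212 : e2 * e1 * e2 = e2)
    (R : A → F → F → A)
    (hR : ∀ (e : A) (z w : F), R e z w = 1 + ((w - z) / (q⁻¹ * z - q * w)) • e)
    (z1 z2 z3 : F) (hz1 : z1 ≠ 0) (hz2 : z2 ≠ 0) (hz3 : z3 ≠ 0)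
    (hd23 : q⁻¹ * z2 - q * z3 ≠ 0) (hd13 : q⁻¹ * z1 - q * z3 ≠ 0)
    (hd12 : q⁻¹ * z1 - q * z2 ≠ 0) :
    (R e1 z2 z3 * R e2 z1 z3 * R e1 z1 z2 =
      R e2 z1 z2 * R e1 z1 z3 * R e2 z2 z3) ∧
    (∀ z w : F, z ≠ 0 → w ≠ 0 → q⁻¹ * z - q * w ≠ 0 → q⁻¹ * w - q * z ≠ 0 →
      R e1 z w * R e1 w z = 1 ∧ R e2 z w * R e2 w z = 1) := by
  constructor
  · rw [hR, hR, hR, hR, hR, hR]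
    apply tl_ybe _ _ _ _ _ _ he1 he2 h121 h212
    have h23 := denom_ne hq hd23
    have h13 := denom_ne hq hd13
    have h12 := denom_ne hq hd12
    rw [coeff_eq hq _ _ hd23, coeff_eq hq _ _ hd13, coeff_eq hq _ _ hd12]
    field_simp
    ring
  · intro z w hz hw hzw hwz
    have key : ∀ e : A, e * e = (q + q⁻¹) • e →
        (1 + ((w - z) / (q⁻¹ * z - q * w)) • e) *
          (1 + ((z - w) / (q⁻¹ * w - q * z)) • e) = 1 := by
      intro e he
      apply tl_unit _ _ _ _ he
      have h1 := denom_ne hq hzw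
      have h2 := denom_ne hq hwz
      rw [coeff_eq hq _ _ hzw, coeff_eq hq _ _ hwz]
      field_simp
      ring
    exact ⟨by rw [hR, hR]; exact key e1 he1, by rw [hR, hR]; exact key e2 he2⟩
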